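/- Let $T>0$, $\nu \ge 1$, $\lambda \ge 0$, and let $f:[0,T)\to[0,\infty)$ be differentiable with $f(0)=r_0^2$ and satisfying $f'(t) \le \nu + (\lambda - \tfrac{2}{T-t}) f(t)$ for all $t\in(0,T)$. Then for all $t \in (0,T)$, $f(t) \le \left(r_0^2 + \nu \int_0^t \left(\tfrac{T}{T-s}\right)^2 e^{-\lambda s}\,ds\right) \left(\tfrac{T-t}{t}\right)^2 e^{\lambda t}$. -/

import Mathlib

open Set

theorem stmt_0 (T ν lam r0 : ℝ) (hT : 0 < T) (hν : 1 ≤ ν) (hlam : 0 ≤ lam)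
    (hr0 : 0 ≤ r0)
    (f f' : ℝ → ℝ)
    (hf : ∀ t ∈ Set.Ico (0:ℝ) T, HasDerivAt f (f' t) t)
    (hf0 : f 0 = r0 ^ 2)
    (hfnn : ∀ t ∈ Set.Ico (0:ℝ) T, 0 ≤ f t)
    (hineq : ∀ t ∈ Set.Ioo (0:ℝ) T, f' t ≤ ν + (lam - 2 / (T - t)) * f t) :
    ∀ t ∈ Set.Ioo (0:ℝ) T,
      f t ≤ (r0 ^ 2 + ν * ∫ s in (0:ℝ)..t, (T / (T - s)) ^ 2 * Real.exp (-lam * s)) *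
        ((T - t) / t) ^ 2 * Real.exp (lam * t) := by
  intro t ht
  obtain ⟨ht0, htT⟩ := ht
  set φ : ℝ → ℝ := fun s => (T / (T - s)) ^ 2 * Real.exp (-lam * s) with hφ
  have hφmeas : Measurable φ := by
    apply Measurable.mul
    · exact ((measurable_const.div (measurable_const.sub measurable_id))).pow measurable_const
    · exact (measurable_id.const_mul (-lam)).exp
  have hφcont : ∀ s : ℝ, s < T → ContinuousAt φ s := by
    intro s hs
    apply ContinuousAt.mul
    · exact (ContinuousAt.div continuousAt_const
        ((continuous_const.sub continuous_id).continuousAt) (by linarith [sub_pos.mpr hs] : T - s ≠ 0)).pow 2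
    · exact ((Real.continuous_exp.comp (continuous_const.mul continuous_id))).continuousAt
  have hφnn : ∀ s : ℝ, 0 ≤ φ s := by
    intro s
    exact mul_nonneg (sq_nonneg _) (Real.exp_pos _).le
  -- integrability of φ on subintervals of [0, t]
  have hφint : ∀ u ∈ Icc (0:ℝ) t, IntervalIntegrable φ MeasureTheory.volume 0 u := by
    intro u hu
    apply ContinuousOn.intervalIntegrable
    intro s hs
    rw [uIcc_of_le hu.1] at hs
    exact (hφcont s (by linarith [hs.2, hu.2])).continuousWithinAt
  set G : ℝ → ℝ := fun u => f u * Real.exp (-lam * u) * (T / (T - u)) ^ 2 -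
      ν * ∫ s in (0:ℝ)..u, φ s with hG
  -- derivative of G at each point of Icc 0 t
  have hGderiv : ∀ u ∈ Icc (0:ℝ) t, HasDerivAt G
      ((f' u * Real.exp (-lam * u) + f u * (Real.exp (-lam * u) * (-lam * 1))) * (T / (T - u)) ^ 2
        + (f u * Real.exp (-lam * u)) *
          (2 * (T / (T - u)) ^ 1 * ((0 * (T - u) - T * (-1)) / (T - u) ^ 2))
        - ν * φ u) u := by
    intro u hu
    have huT : u < T := lt_of_le_of_lt hu.2 htT
    have hP : (0:ℝ) < T - u := sub_pos.mpr huT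
    have hfu : HasDerivAt f (f' u) u := hf u ⟨hu.1, huT⟩
    have he : HasDerivAt (fun u => Real.exp (-lam * u)) (Real.exp (-lam * u) * (-lam * 1)) u :=
      ((hasDerivAt_id u).const_mul (-lam)).exp
    have hsub : HasDerivAt (fun u : ℝ => T - u) (-1) u := by
      simpa using ((hasDerivAt_id u).const_sub T)
    have hdiv : HasDerivAt (fun u : ℝ => T / (T - u))
        ((0 * (T - u) - T * (-1)) / (T - u) ^ 2) u :=
      (hasDerivAt_const u T).div hsub (ne_of_gt hP)
    have hq : HasDerivAt (fun u : ℝ => (T / (T - u)) ^ 2)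
        (2 * (T / (T - u)) ^ 1 * ((0 * (T - u) - T * (-1)) / (T - u) ^ 2)) u := by
      simpa using hdiv.fun_pow 2
    have hI : HasDerivAt (fun u => ∫ s in (0:ℝ)..u, φ s) (φ u) u := by
      apply intervalIntegral.integral_hasDerivAt_right (hφint u hu)
      · exact ⟨Set.univ, Filter.univ_mem,
          (hφmeas.stronglyMeasurable).aestronglyMeasurable.restrict⟩
      · exact hφcont u huT
    exact ((hfu.mul he).mul hq).sub (hI.const_mul ν)
  have hIccsub : Icc (0:ℝ) t ⊆ Ico (0:ℝ) T := fun u hu => ⟨hu.1, lt_of_le_of_lt hu.2 htT⟩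
  -- G is antitone on [0, t]
  have hanti : AntitoneOn G (Icc (0:ℝ) t) := by
    apply antitoneOn_of_deriv_nonpos (convex_Icc 0 t)
    · intro u hu
      exact (hGderiv u hu).continuousAt.continuousWithinAt
    · intro u hu
      rw [interior_Icc] at hu
      exact ((hGderiv u ⟨hu.1.le, hu.2.le⟩).differentiableAt).differentiableWithinAt
    · intro u hu
      rw [interior_Icc] at hu
      have huT : u < T := lt_of_lt_of_le hu.2 htT.le
      have hP : (0:ℝ) < T - u := sub_pos.mpr huT
      rw [(hGderiv u ⟨hu.1.le, hu.2.le⟩).deriv]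
      have hkey := hineq u ⟨hu.1, huT⟩
      have hfnnu : 0 ≤ f u := hfnn u ⟨hu.1.le, huT⟩
      have hE : (0:ℝ) < Real.exp (-lam * u) := Real.exp_pos _
      have heq : (f' u * Real.exp (-lam * u) + f u * (Real.exp (-lam * u) * (-lam * 1))) *
            (T / (T - u)) ^ 2
          + (f u * Real.exp (-lam * u)) *
            (2 * (T / (T - u)) ^ 1 * ((0 * (T - u) - T * (-1)) / (T - u) ^ 2))
          - ν * φ u
          = (f' u - (ν + (lam - 2 / (T - u)) * f u)) * (Real.exp (-lam * u) * (T / (T - u)) ^ 2) := by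
        rw [hφ]
        field_simp
        ring
      rw [heq]
      apply mul_nonpos_of_nonpos_of_nonneg
      · linarith
      · positivity
  have hle : G t ≤ G 0 := hanti ⟨le_refl 0, ht0.le⟩ ⟨ht0.le, le_refl t⟩ ht0.le
  have hG0 : G 0 = r0 ^ 2 := by
    simp [hG, hf0, sub_zero, div_self (ne_of_gt hT)]
  rw [hG0] at hle
  -- now hle : f t * exp(-lam t) * (T/(T-t))^2 - ν * ∫ ≤ r0^2
  have hPt : (0:ℝ) < T - t := sub_pos.mpr htT
  set I : ℝ := ∫ s in (0:ℝ)..t, φ s with hI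
  have hInn : 0 ≤ I := by
    apply intervalIntegral.integral_nonneg ht0.le
    intro s _
    exact hφnn s
  have hmain : f t ≤ (r0 ^ 2 + ν * I) * ((T - t) / T) ^ 2 * Real.exp (lam * t) := by
    have hle' : f t * Real.exp (-lam * t) * (T / (T - t)) ^ 2 - ν * I ≤ r0 ^ 2 := hle
    have h1 : f t * Real.exp (-lam * t) * (T / (T - t)) ^ 2 ≤ r0 ^ 2 + ν * I := by linarith
    have hE : Real.exp (-lam * t) * Real.exp (lam * t) = 1 := by
      rw [← Real.exp_add, show -lam * t + lam * t = 0 by ring, Real.exp_zero]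
    have hTP : (T / (T - t)) ^ 2 * ((T - t) / T) ^ 2 = 1 := by
      field_simp
    have h2 : (f t * Real.exp (-lam * t) * (T / (T - t)) ^ 2) * (((T - t) / T) ^ 2 * Real.exp (lam * t)) = f t := by
      calc (f t * Real.exp (-lam * t) * (T / (T - t)) ^ 2) * (((T - t) / T) ^ 2 * Real.exp (lam * t))
          = f t * ((T / (T - t)) ^ 2 * ((T - t) / T) ^ 2) * (Real.exp (-lam * t) * Real.exp (lam * t)) := by
            ring
        _ = f t := by rw [hE, hTP]; ring
    have h3 : (0:ℝ) ≤ ((T - t) / T) ^ 2 * Real.exp (lam * t) := by positivity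
    calc f t = (f t * Real.exp (-lam * t) * (T / (T - t)) ^ 2) * (((T - t) / T) ^ 2 * Real.exp (lam * t)) := h2.symm
      _ ≤ (r0 ^ 2 + ν * I) * (((T - t) / T) ^ 2 * Real.exp (lam * t)) := mul_le_mul_of_nonneg_right h1 h3
      _ = (r0 ^ 2 + ν * I) * ((T - t) / T) ^ 2 * Real.exp (lam * t) := by ring
  have hAnn : 0 ≤ r0 ^ 2 + ν * I := by positivity
  have hfrac : ((T - t) / T) ^ 2 ≤ ((T - t) / t) ^ 2 := by
    apply pow_le_pow_left₀ (by positivity)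
    exact div_le_div_of_nonneg_left hPt.le ht0 (le_of_lt htT)
  calc f t ≤ (r0 ^ 2 + ν * I) * ((T - t) / T) ^ 2 * Real.exp (lam * t) := hmain
    _ ≤ (r0 ^ 2 + ν * I) * ((T - t) / t) ^ 2 * Real.exp (lam * t) := by
        apply mul_le_mul_of_nonneg_right _ (Real.exp_pos _).le
        exact mul_le_mul_of_nonneg_left hfrac hAnn
    _ = (r0 ^ 2 + ν * ∫ s in (0:ℝ)..t, (T / (T - s)) ^ 2 * Real.exp (-lam * s)) *
        ((T - t) / t) ^ 2 * Real.exp (lam * t) := rfl
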